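/- The leading eigenvalue $e_1 = \hat\mu - \mu$ is nonincreasing in both $x^a$ and $x^v$ (so $|e_1|$ is nondecreasing in each vaccination rate): more vaccination speeds up convergence of the epidemic to the disease-free state. -/
import Mathlib

/-- Key monotonicity lemma: the larger root of `λ² - (Au+Bv)λ + Huv` is
monotone in `u`, provided `0 ≤ H ≤ A*B`, `0 ≤ A`, `0 ≤ v`, `0 ≤ u₁`. -/
lemma mono_aux (A B H v u₁ u₂ : ℝ) (hA : 0 ≤ A) (hH : 0 ≤ H) (hAB : H ≤ A * B)
    (hv : 0 ≤ v) (hu1 : 0 ≤ u₁) (hu : u₁ ≤ u₂) :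
    (A*u₁ + B*v + Real.sqrt ((A*u₁ + B*v)^2 - 4*H*u₁*v))/2 ≤
    (A*u₂ + B*v + Real.sqrt ((A*u₂ + B*v)^2 - 4*H*u₂*v))/2 := by
  set D₁ := (A*u₁ + B*v)^2 - 4*H*u₁*v with hD₁
  set D₂ := (A*u₂ + B*v)^2 - 4*H*u₂*v with hD₂
  have hD₁0 : 0 ≤ D₁ := by nlinarith [sq_nonneg (A*u₁ - B*v), mul_nonneg hu1 hv]
  have hD₂0 : 0 ≤ D₂ := by
    nlinarith [sq_nonneg (A*u₂ - B*v), mul_nonneg (hu1.trans hu) hv]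
  set s := Real.sqrt D₁ with hs
  have hs0 : 0 ≤ s := Real.sqrt_nonneg _
  have hs2 : s^2 = D₁ := Real.sq_sqrt hD₁0
  have habs : |A*u₁ - B*v| ≤ s := by
    rw [hs, ← Real.sqrt_sq_eq_abs]
    exact Real.sqrt_le_sqrt (by nlinarith [mul_nonneg hu1 hv])
  have hlow : B*v - A*u₁ ≤ s := by linarith [neg_le_of_abs_le habs]
  have key : s - A*(u₂ - u₁) ≤ Real.sqrt D₂ := by
    rcases le_or_gt (s - A*(u₂ - u₁)) 0 with hc | hc
    · exact hc.trans (Real.sqrt_nonneg _)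
    · rw [show s - A*(u₂-u₁) = Real.sqrt ((s - A*(u₂-u₁))^2) from
        (Real.sqrt_sq hc.le).symm]
      apply Real.sqrt_le_sqrt
      have hd : 0 ≤ u₂ - u₁ := by linarith
      nlinarith [mul_nonneg hd (mul_nonneg hA hs0),
        mul_nonneg hd (mul_nonneg hA (mul_nonneg hA hu1)),
        mul_nonneg hd (mul_nonneg hv (by nlinarith : (0:ℝ) ≤ A*B - H))]
  linarith

theorem stmt_13 (h q μ : ℝ)
    (hh : h ∈ Set.Icc (0:ℝ) 1) (hq : q ∈ Set.Icc (0:ℝ) 1)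
    (qa qv : ℝ) (T Δ μhat : ℝ → ℝ → ℝ)
    (hqa : qa = h + (1-h)*q) (hqv : qv = h + (1-h)*(1-q))
    (hT : ∀ xa xv, T xa xv = qa*(1-xa) + qv*(1-xv))
    (hΔ : ∀ xa xv, Δ xa xv = Real.sqrt ((T xa xv)^2 - 4*h*(1-xa)*(1-xv)))
    (hμhat : ∀ xa xv, μhat xa xv = (T xa xv + Δ xa xv)/2)
    (hstab : ∀ xa ∈ Set.Icc (0:ℝ) 1, ∀ xv ∈ Set.Icc (0:ℝ) 1, μhat xa xv < μ) :
    (∀ xv ∈ Set.Icc (0:ℝ) 1,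
      AntitoneOn (fun xa => μhat xa xv - μ) (Set.Icc (0:ℝ) 1))
    ∧ (∀ xa ∈ Set.Icc (0:ℝ) 1,
      AntitoneOn (fun xv => μhat xa xv - μ) (Set.Icc (0:ℝ) 1))
    ∧ (∀ xv ∈ Set.Icc (0:ℝ) 1,
      MonotoneOn (fun xa => |μhat xa xv - μ|) (Set.Icc (0:ℝ) 1))
    ∧ (∀ xa ∈ Set.Icc (0:ℝ) 1,
      MonotoneOn (fun xv => |μhat xa xv - μ|) (Set.Icc (0:ℝ) 1)) := by
  obtain ⟨hh0, hh1⟩ := hh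
  obtain ⟨hq0, hq1⟩ := hq
  have hqa0 : 0 ≤ qa := by nlinarith
  have hqv0 : 0 ≤ qv := by nlinarith
  have hAB : h ≤ qa * qv := by
    nlinarith [mul_nonneg (mul_nonneg hq0 (by linarith : (0:ℝ) ≤ 1 - q)) (sq_nonneg (1-h))]
  -- antitone in xa
  have A1 : ∀ xv ∈ Set.Icc (0:ℝ) 1, ∀ x₁ ∈ Set.Icc (0:ℝ) 1, ∀ x₂ ∈ Set.Icc (0:ℝ) 1,
      x₁ ≤ x₂ → μhat x₂ xv ≤ μhat x₁ xv := by
    intro xv hxv x₁ hx₁ x₂ hx₂ h12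
    have := mono_aux qa qv h (1-xv) (1-x₂) (1-x₁) hqa0 hh0 hAB
      (by linarith [hxv.2]) (by linarith [hx₂.2]) (by linarith)
    rw [hμhat, hμhat, hΔ, hΔ, hT, hT]
    linarith
  -- antitone in xv
  have A2 : ∀ xa ∈ Set.Icc (0:ℝ) 1, ∀ x₁ ∈ Set.Icc (0:ℝ) 1, ∀ x₂ ∈ Set.Icc (0:ℝ) 1,
      x₁ ≤ x₂ → μhat xa x₂ ≤ μhat xa x₁ := by
    intro xa hxa x₁ hx₁ x₂ hx₂ h12
    have key := mono_aux qv qa h (1-xa) (1-x₂) (1-x₁) hqv0 hh0 (by linarith [hAB])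
      (by linarith [hxa.2]) (by linarith [hx₂.2]) (by linarith)
    rw [hμhat, hμhat, hΔ, hΔ, hT, hT]
    have e1 : (qa*(1-xa) + qv*(1-x₂))^2 - 4*h*(1-xa)*(1-x₂)
        = (qv*(1-x₂) + qa*(1-xa))^2 - 4*h*(1-x₂)*(1-xa) := by ring
    have e2 : (qa*(1-xa) + qv*(1-x₁))^2 - 4*h*(1-xa)*(1-x₁)
        = (qv*(1-x₁) + qa*(1-xa))^2 - 4*h*(1-x₁)*(1-xa) := by ring
    rw [e1, e2]
    linarith
  refine ⟨?_, ?_, ?_, ?_⟩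
  · intro xv hxv x₁ hx₁ x₂ hx₂ h12
    simp only
    linarith [A1 xv hxv x₁ hx₁ x₂ hx₂ h12]
  · intro xa hxa x₁ hx₁ x₂ hx₂ h12
    simp only
    linarith [A2 xa hxa x₁ hx₁ x₂ hx₂ h12]
  · intro xv hxv x₁ hx₁ x₂ hx₂ h12
    simp only
    rw [abs_of_neg (by linarith [hstab x₁ hx₁ xv hxv]),
      abs_of_neg (by linarith [hstab x₂ hx₂ xv hxv])]
    linarith [A1 xv hxv x₁ hx₁ x₂ hx₂ h12]
  · intro xa hxa x₁ hx₁ x₂ hx₂ h12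
    simp only
    rw [abs_of_neg (by linarith [hstab xa hxa x₁ hx₁]),
      abs_of_neg (by linarith [hstab xa hxa x₂ hx₂])]
    linarith [A2 xa hxa x₁ hx₁ x₂ hx₂ h12]
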